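/- arXiv:2306.03625 — 5 statements merged into one kernel-verified Lean document; each statement's English description precedes it below -/
import Mathlib

section
/- Let (Ω, F, P) be a probability space and let Δ, Δ̂ : Ω → ℝ be measurable. Assume Δ satisfies the margin condition with exponent α > 0 and constant C > 0, i.e. P(|Δ| ≤ t) ≤ C·t^α for all t ≥ 0, and assume Δ̂ − Δ is essentially bounded with M = ‖Δ̂ − Δ‖_{L^∞(P)}. Then E[Δ · (1{Δ > 0} − 1{Δ̂ > 0})] ≤ C · M^{1+α}. -/
open MeasureTheory
open scoped ENNReal

/-- First comparison inequality (Lemma 2(i)): under the margin condition with exponent `α`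
and constant `C`, the regret of the plug-in policy is bounded by `C · ‖Δ̂ − Δ‖_∞^{1+α}`. -/
theorem stmt_3 {Ω : Type*} [MeasurableSpace Ω] (P : Measure Ω) [IsProbabilityMeasure P]
    (Δ Δhat : Ω → ℝ) (hΔ : Measurable Δ) (hΔhat : Measurable Δhat)
    (α C : ℝ) (hα : 0 < α) (hC : 0 < C)
    (hmargin : ∀ t : ℝ, 0 ≤ t → (P {ω | |Δ ω| ≤ t}).toReal ≤ C * t ^ α)
    (hbdd : MemLp (Δhat - Δ) ∞ P) :
    ∫ ω, Δ ω * ((if 0 < Δ ω then (1 : ℝ) else 0) - (if 0 < Δhat ω then (1 : ℝ) else 0)) ∂P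
      ≤ C * (eLpNorm (Δhat - Δ) ∞ P).toReal ^ (1 + α) := by
  set M : ℝ := (eLpNorm (Δhat - Δ) ∞ P).toReal with hMdef
  have hM0 : 0 ≤ M := ENNReal.toReal_nonneg
  have hlt : eLpNorm (Δhat - Δ) ∞ P < ∞ := hbdd.2
  have hae : ∀ᵐ ω ∂P, |Δhat ω - Δ ω| ≤ M := by
    have h := ae_le_eLpNormEssSup (f := Δhat - Δ) (μ := P)
    filter_upwards [h] with ω hω
    have h2 : ((‖(Δhat - Δ) ω‖₊ : ℝ≥0∞)) ≤ eLpNorm (Δhat - Δ) ∞ P := by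
      rw [eLpNorm_exponent_top]; exact hω
    have : ((‖(Δhat - Δ) ω‖₊ : ℝ≥0∞)).toReal ≤ M :=
      ENNReal.toReal_mono hlt.ne h2
    simpa [Real.norm_eq_abs] using this
  set s : Set Ω := {ω | |Δ ω| ≤ M} with hsdef
  have hs : MeasurableSet s := measurableSet_le (hΔ.abs) measurable_const
  set f : Ω → ℝ := fun ω =>
    Δ ω * ((if 0 < Δ ω then (1 : ℝ) else 0) - (if 0 < Δhat ω then (1 : ℝ) else 0)) with hfdef
  set g : Ω → ℝ := s.indicator (fun _ => M) with hgdef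
  have hf_nonneg : ∀ ω, 0 ≤ f ω := by
    intro ω
    by_cases h1 : 0 < Δ ω <;> by_cases h2 : 0 < Δhat ω <;>
      simp [hfdef, h1, h2] <;> first | linarith | linarith [not_lt.mp h1]
  have hg_nonneg : ∀ ω, 0 ≤ g ω := fun ω => Set.indicator_nonneg (fun _ _ => hM0) ω
  have hfg : f ≤ᵐ[P] g := by
    filter_upwards [hae] with ω hω
    by_cases h1 : 0 < Δ ω <;> by_cases h2 : 0 < Δhat ω
    · simp [hfdef, h1, h2]; exact hg_nonneg ω
    · have hmem : ω ∈ s := by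
        simp only [hsdef, Set.mem_setOf_eq, abs_of_pos h1]
        have := abs_le.mp hω
        linarith [this.1, not_lt.mp h2]
      have : f ω = Δ ω := by simp [hfdef, h1, h2]
      rw [this, hgdef, Set.indicator_of_mem hmem]
      have hmem' : |Δ ω| ≤ M := hmem
      exact le_trans (le_abs_self _) hmem'
    · have hmem : ω ∈ s := by
        simp only [hsdef, Set.mem_setOf_eq, abs_of_nonpos (not_lt.mp h1)]
        have := abs_le.mp hω
        linarith [this.2]
      have hfeq : f ω = -Δ ω := by simp [hfdef, h1, h2]
      rw [hfeq, hgdef, Set.indicator_of_mem hmem]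
      have hmem' : |Δ ω| ≤ M := hmem
      calc -Δ ω ≤ |Δ ω| := neg_le_abs _
        _ ≤ M := hmem'
    · simp [hfdef, h1, h2]; exact hg_nonneg ω
  have hg_int : Integrable g P := (integrable_const M).indicator hs
  have hstep : ∫ ω, f ω ∂P ≤ ∫ ω, g ω ∂P :=
    integral_mono_of_nonneg (Filter.Eventually.of_forall hf_nonneg) hg_int hfg
  have hg_eq : ∫ ω, g ω ∂P = (P s).toReal * M := by
    rw [hgdef, integral_indicator_const (M : ℝ) hs]; simp [smul_eq_mul, Measure.real]
  have hPs : (P s).toReal ≤ C * M ^ α := hmargin M hM0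
  have hfinal : (P s).toReal * M ≤ C * M ^ (1 + α) := by
    rcases eq_or_lt_of_le hM0 with hM | hM
    · rw [← hM, Real.zero_rpow (show (1:ℝ)+α ≠ 0 by positivity)]
      simp
    · have : M ^ (1 + α) = M * M ^ α := by
        rw [Real.rpow_add hM, Real.rpow_one]
      rw [this]
      calc (P s).toReal * M ≤ (C * M ^ α) * M :=
            mul_le_mul_of_nonneg_right hPs hM0
        _ = C * (M * M ^ α) := by ring
  calc ∫ ω, f ω ∂P ≤ ∫ ω, g ω ∂P := hstep
    _ = (P s).toReal * M := hg_eq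
    _ ≤ C * M ^ (1 + α) := hfinal
end

section
/- Let (Ω, F, P) be a probability space, let 1 ≤ q < ∞, and let Δ, Δ̂ : Ω → ℝ be measurable with Δ integrable and Δ̂ − Δ ∈ L^q(P). Assume Δ satisfies the margin condition with exponent α > 0 and constant C > 0, i.e. P(|Δ| ≤ t) ≤ C·t^α for all t ≥ 0. Then there exists a constant C′ > 0, depending only on C, q, and α, such that E[Δ · (1{Δ > 0} − 1{Δ̂ > 0})] ≤ C′ · ‖Δ̂ − Δ‖_{L^q(P)}^{q(1+α)/(q+α)}. -/
open MeasureTheory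

lemma aux_pointwise (t q a d : ℝ) (ht : 0 < t) (hq : 1 ≤ q) (ha : 0 ≤ a) (had : a ≤ d) :
    a ≤ t * (if a ≤ t then (1:ℝ) else 0) + d ^ q * t ^ (1 - q) := by
  have hd0 : 0 ≤ d := le_trans ha had
  by_cases h : a ≤ t
  · simp only [h, if_true, mul_one]
    have hd : (0:ℝ) ≤ d ^ q * t ^ (1-q) := by positivity
    linarith
  · simp only [h, if_false, mul_zero, zero_add]
    push_neg at h
    have hd : 0 < d := lt_of_lt_of_le (lt_of_le_of_lt ht.le h) had
    have h1 : d ^ q = d * d ^ (q-1) := by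
      have := Real.rpow_add hd 1 (q-1)
      simp [Real.rpow_one] at this
      simpa using this
    rw [h1, mul_assoc]
    have h2 : (1:ℝ) ≤ d ^ (q-1) * t ^ (1-q) := by
      have hle : t ^ (q-1) ≤ d ^ (q-1) :=
        Real.rpow_le_rpow ht.le (le_trans h.le had) (by linarith)
      have ht' : (0:ℝ) < t ^ (q-1) := Real.rpow_pos_of_pos ht _
      have hdiv : (1:ℝ) ≤ d ^ (q-1) / t ^ (q-1) := (one_le_div ht').mpr hle
      calc (1:ℝ) ≤ d ^ (q-1) / t ^ (q-1) := hdiv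
        _ = d ^ (q-1) * t ^ (1-q) := by
            rw [div_eq_mul_inv, ← Real.rpow_neg ht.le]; ring_nf
    calc a ≤ d := had
      _ = d * 1 := (mul_one d).symm
      _ ≤ d * (d ^ (q-1) * t ^ (1-q)) := mul_le_mul_of_nonneg_left h2 hd.le

/-- Second comparison inequality (Lemma 2(ii)): under the margin condition with exponent `α`
and constant `C`, there is a constant `C′`, depending only on `C`, `q` and `α`, such that the
regret of the plug-in policy is bounded by `C′ · ‖Δ̂ − Δ‖_{L^q}^{q(1+α)/(q+α)}`. -/
theorem stmt_4 (C q α : ℝ) (hC : 0 < C) (hq : 1 ≤ q) (hα : 0 < α) :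
    ∃ C' : ℝ, 0 < C' ∧
      ∀ {Ω : Type} [MeasurableSpace Ω] (P : Measure Ω), IsProbabilityMeasure P →
        ∀ (Δ Δhat : Ω → ℝ), Measurable Δ → Measurable Δhat → Integrable Δ P →
          MemLp (Δhat - Δ) (ENNReal.ofReal q) P →
          (∀ t : ℝ, 0 ≤ t → (P {ω | |Δ ω| ≤ t}).toReal ≤ C * t ^ α) →
          ∫ ω, Δ ω * ((if 0 < Δ ω then (1 : ℝ) else 0) - (if 0 < Δhat ω then (1 : ℝ) else 0)) ∂P
            ≤ C' * (eLpNorm (Δhat - Δ) (ENNReal.ofReal q) P).toReal ^ (q * (1 + α) / (q + α)) := by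
  have hq0 : (0:ℝ) < q := lt_of_lt_of_le one_pos hq
  have hqα : (0:ℝ) < q + α := by linarith
  have hr0 : 0 < q * (1 + α) / (q + α) := by positivity
  refine ⟨C + 1, by linarith, ?_⟩
  intro Ω _ P hP Δ Δhat hΔm hΔhm hΔi hD hmargin
  have hp0 : (ENNReal.ofReal q) ≠ 0 := by
    simp only [ne_eq, ENNReal.ofReal_eq_zero, not_le]; linarith
  have hpt : (ENNReal.ofReal q).toReal = q := ENNReal.toReal_ofReal hq0.le
  set ε := (eLpNorm (Δhat - Δ) (ENNReal.ofReal q) P).toReal with hεdef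
  by_cases hε0 : eLpNorm (Δhat - Δ) (ENNReal.ofReal q) P = 0
  · -- degenerate case : Δhat = Δ a.e.
    have hD0 : (Δhat - Δ) =ᵐ[P] 0 :=
      (eLpNorm_eq_zero_iff hD.aestronglyMeasurable hp0).mp hε0
    have hae : (fun ω => Δ ω * ((if 0 < Δ ω then (1:ℝ) else 0) - (if 0 < Δhat ω then (1:ℝ) else 0)))
        =ᵐ[P] 0 := by
      filter_upwards [hD0] with ω hω
      simp only [Pi.sub_apply, Pi.zero_apply] at hω ⊢
      have : Δhat ω = Δ ω := by linarith
      rw [this]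
      ring
    rw [integral_congr_ae hae]
    simp only [integral_zero']
    have : ε = 0 := by rw [hεdef, hε0]; simp
    rw [this, Real.zero_rpow hr0.ne', mul_zero]
  · have hεpos : 0 < ε := ENNReal.toReal_pos hε0 hD.eLpNorm_ne_top
    set t : ℝ := ε ^ (q / (q + α)) with htdef
    have ht : 0 < t := Real.rpow_pos_of_pos hεpos _
    -- the integral of ‖D‖^q equals ε^q
    have hnorm : eLpNorm (Δhat - Δ) (ENNReal.ofReal q) P
        = ENNReal.ofReal ((∫ a, ‖(Δhat - Δ) a‖ ^ q ∂P) ^ q⁻¹) := by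
      have := hD.eLpNorm_eq_integral_rpow_norm hp0 (by simp)
      rwa [hpt] at this
    have hInonneg : 0 ≤ ∫ a, ‖(Δhat - Δ) a‖ ^ q ∂P :=
      integral_nonneg fun a => Real.rpow_nonneg (norm_nonneg _) _
    have hεeq : ε = (∫ a, ‖(Δhat - Δ) a‖ ^ q ∂P) ^ q⁻¹ := by
      rw [hεdef, hnorm, ENNReal.toReal_ofReal (Real.rpow_nonneg hInonneg _)]
    have hint : ∫ a, ‖(Δhat - Δ) a‖ ^ q ∂P = ε ^ q := by
      rw [hεeq, ← Real.rpow_mul hInonneg, inv_mul_cancel₀ hq0.ne', Real.rpow_one]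
    -- measurability of the indicator part
    have hsmeas : MeasurableSet {ω | |Δ ω| ≤ t} :=
      measurableSet_le hΔm.abs measurable_const
    -- pointwise bound
    have hpoint : ∀ ω, Δ ω * ((if 0 < Δ ω then (1:ℝ) else 0) - (if 0 < Δhat ω then (1:ℝ) else 0))
        ≤ t * (if |Δ ω| ≤ t then (1:ℝ) else 0) + ‖(Δhat - Δ) ω‖ ^ q * t ^ (1 - q) := by
      intro ω
      have hg0 : 0 ≤ t * (if |Δ ω| ≤ t then (1:ℝ) else 0) + ‖(Δhat - Δ) ω‖ ^ q * t ^ (1 - q) := by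
        have h1 : 0 ≤ t * (if |Δ ω| ≤ t then (1:ℝ) else 0) := by
          split <;> simp [ht.le]
        have h2 : 0 ≤ ‖(Δhat - Δ) ω‖ ^ q * t ^ (1-q) := by positivity
        linarith
      have key := aux_pointwise t q (|Δ ω|) (‖(Δhat - Δ) ω‖) ht hq (abs_nonneg _)
      by_cases h1 : 0 < Δ ω <;> by_cases h2 : 0 < Δhat ω
      · simp only [h1, h2, if_true, sub_self, mul_zero]; exact hg0
      · simp only [h1, h2, if_true, if_false, sub_zero, mul_one]
        push_neg at h2
        have hd : |Δ ω| ≤ ‖(Δhat - Δ) ω‖ := by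
          rw [Pi.sub_apply, Real.norm_eq_abs, abs_of_pos h1]
          have := neg_abs_le (Δhat ω - Δ ω)
          linarith
        calc Δ ω = |Δ ω| := (abs_of_pos h1).symm
          _ ≤ _ := key hd
      · simp only [h1, h2, if_true, if_false, zero_sub, mul_neg, mul_one]
        push_neg at h1
        have hd : |Δ ω| ≤ ‖(Δhat - Δ) ω‖ := by
          rw [Pi.sub_apply, Real.norm_eq_abs, abs_of_nonpos h1]
          have := le_abs_self (Δhat ω - Δ ω)
          linarith
        calc -Δ ω = |Δ ω| := (abs_of_nonpos h1).symm
          _ ≤ _ := key hd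
      · simp only [h1, h2, if_false, sub_self, mul_zero]; exact hg0
    -- integrability
    have hcmeas : Measurable fun ω => ((if 0 < Δ ω then (1:ℝ) else 0) - (if 0 < Δhat ω then (1:ℝ) else 0)) :=
      ((Measurable.ite (measurableSet_lt measurable_const hΔm) measurable_const measurable_const).sub
       (Measurable.ite (measurableSet_lt measurable_const hΔhm) measurable_const measurable_const))
    have hL : Integrable (fun ω => Δ ω * ((if 0 < Δ ω then (1:ℝ) else 0) - (if 0 < Δhat ω then (1:ℝ) else 0))) P := by
      have hb : Integrable (fun ω => ((if 0 < Δ ω then (1:ℝ) else 0) - (if 0 < Δhat ω then (1:ℝ) else 0)) * Δ ω) P := by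
        refine hΔi.bdd_mul (c := 2) hcmeas.aestronglyMeasurable (ae_of_all _ fun x => ?_)
        rw [Real.norm_eq_abs]
        split <;> split <;> norm_num
      exact hb.congr (ae_of_all _ fun ω => mul_comm _ _)
    have hf1 : Integrable (fun ω => t * (if |Δ ω| ≤ t then (1:ℝ) else 0)) P := by
      have heq : (fun ω => t * (if |Δ ω| ≤ t then (1:ℝ) else 0))
          = Set.indicator {ω | |Δ ω| ≤ t} (fun _ => t) := by
        funext ω
        by_cases h : |Δ ω| ≤ t <;> simp [Set.indicator_apply, Set.mem_setOf_eq, h]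
      rw [heq]
      exact (integrable_const t).indicator hsmeas
    have hf2 : Integrable (fun ω => ‖(Δhat - Δ) ω‖ ^ q * t ^ (1 - q)) P := by
      have := hD.integrable_norm_rpow hp0 (by simp)
      rw [hpt] at this
      exact this.mul_const _
    -- put it together
    have hI1 : ∫ ω, t * (if |Δ ω| ≤ t then (1:ℝ) else 0) ∂P = t * (P {ω | |Δ ω| ≤ t}).toReal := by
      rw [integral_const_mul]
      congr 1
      have heq : (fun ω => (if |Δ ω| ≤ t then (1:ℝ) else 0))
          = Set.indicator {ω | |Δ ω| ≤ t} (1 : Ω → ℝ) := by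
        funext ω
        by_cases h : |Δ ω| ≤ t <;> simp [Set.indicator_apply, Set.mem_setOf_eq, h]
      rw [heq]
      exact integral_indicator_one hsmeas
    have hI2 : ∫ ω, ‖(Δhat - Δ) ω‖ ^ q * t ^ (1 - q) ∂P = ε ^ q * t ^ (1 - q) := by
      rw [integral_mul_const, hint]
    have e1 : t * (C * t ^ α) = C * ε ^ (q * (1 + α) / (q + α)) := by
      have h3 : t * t ^ α = t ^ (1 + α) := by rw [Real.rpow_add ht, Real.rpow_one]
      have h4 : t ^ (1 + α) = ε ^ (q * (1 + α) / (q + α)) := by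
        rw [htdef, ← Real.rpow_mul hεpos.le]
        congr 1
        field_simp
      calc t * (C * t ^ α) = C * (t * t ^ α) := by ring
        _ = C * ε ^ (q * (1 + α) / (q + α)) := by rw [h3, h4]
    have e2 : ε ^ q * t ^ (1 - q) = ε ^ (q * (1 + α) / (q + α)) := by
      rw [htdef, ← Real.rpow_mul hεpos.le, ← Real.rpow_add hεpos]
      congr 1
      field_simp
      ring
    calc ∫ ω, Δ ω * ((if 0 < Δ ω then (1:ℝ) else 0) - (if 0 < Δhat ω then (1:ℝ) else 0)) ∂P
        ≤ ∫ ω, (t * (if |Δ ω| ≤ t then (1:ℝ) else 0) + ‖(Δhat - Δ) ω‖ ^ q * t ^ (1 - q)) ∂P :=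
          integral_mono hL (hf1.add hf2) hpoint
      _ = t * (P {ω | |Δ ω| ≤ t}).toReal + ε ^ q * t ^ (1 - q) := by
          rw [integral_add hf1 hf2, hI1, hI2]
      _ ≤ t * (C * t ^ α) + ε ^ q * t ^ (1 - q) := by
          have := hmargin t ht.le
          nlinarith
      _ = (C + 1) * ε ^ (q * (1 + α) / (q + α)) := by rw [e1, e2]; ring
end

section
/- Let (Ω, F, P) be a probability space and let Δ, Δ̂ : Ω → ℝ be measurable. Assume Δ satisfies the margin condition with exponent α > 0 and constant C > 0, i.e. P(|Δ| ≤ t) ≤ C·t^α for all t ≥ 0, and that Δ̂ − Δ is essentially bounded. Then P(1{Δ̂ > 0} ≠ 1{Δ > 0}) ≤ P(|Δ| ≤ |Δ̂ − Δ|) ≤ C · ‖Δ̂ − Δ‖_{L^∞(P)}^α. -/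
open MeasureTheory
open scoped ENNReal

/-- Disagreement bound (Theorem 2(ii) key step): under the margin condition with exponent `α`
and constant `C`, `P(1{Δ̂ > 0} ≠ 1{Δ > 0}) ≤ P(|Δ| ≤ |Δ̂ − Δ|) ≤ C · ‖Δ̂ − Δ‖_∞^α`. -/
theorem stmt_6 {Ω : Type*} [MeasurableSpace Ω] (P : Measure Ω) [IsProbabilityMeasure P]
    (Δ Δhat : Ω → ℝ) (hΔ : Measurable Δ) (hΔhat : Measurable Δhat)
    (α C : ℝ) (hα : 0 < α) (hC : 0 < C)
    (hmargin : ∀ t : ℝ, 0 ≤ t → (P {ω | |Δ ω| ≤ t}).toReal ≤ C * t ^ α)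
    (hbdd : MemLp (Δhat - Δ) ∞ P) :
    (P {ω | (if 0 < Δhat ω then (1 : ℝ) else 0) ≠ (if 0 < Δ ω then (1 : ℝ) else 0)}).toReal
        ≤ (P {ω | |Δ ω| ≤ |Δhat ω - Δ ω|}).toReal ∧
    (P {ω | |Δ ω| ≤ |Δhat ω - Δ ω|}).toReal
        ≤ C * (eLpNorm (Δhat - Δ) ∞ P).toReal ^ α := by
  set M : ℝ := (eLpNorm (Δhat - Δ) ∞ P).toReal with hM
  constructor
  · apply ENNReal.toReal_mono (measure_ne_top P _)
    apply measure_mono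
    intro ω hω
    simp only [Set.mem_setOf_eq] at hω ⊢
    by_cases h1 : 0 < Δhat ω <;> by_cases h2 : 0 < Δ ω <;>
      simp [h1, h2] at hω ⊢
    · -- Δhat > 0, Δ ≤ 0
      push_neg at h2
      rw [abs_of_nonpos h2]
      calc -Δ ω ≤ Δhat ω - Δ ω := by linarith
        _ ≤ |Δhat ω - Δ ω| := le_abs_self _
    · -- Δhat ≤ 0, Δ > 0
      push_neg at h1
      rw [abs_of_pos h2]
      calc Δ ω ≤ Δ ω - Δhat ω := by linarith
        _ ≤ |Δhat ω - Δ ω| := by rw [abs_sub_comm]; exact le_abs_self _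
  · have hMfin : eLpNorm (Δhat - Δ) ∞ P ≠ ∞ := hbdd.eLpNorm_ne_top
    have hae : ∀ᵐ ω ∂P, |Δhat ω - Δ ω| ≤ M := by
      have h := ae_le_eLpNormEssSup (f := Δhat - Δ) (μ := P)
      filter_upwards [h] with ω hω
      have : ((‖(Δhat - Δ) ω‖₊ : ℝ≥0∞)).toReal ≤ M := by
        rw [hM, eLpNorm_exponent_top]
        exact ENNReal.toReal_mono hMfin hω
      simpa [Real.norm_eq_abs] using this
    have hsub : P {ω | |Δ ω| ≤ |Δhat ω - Δ ω|} ≤ P {ω | |Δ ω| ≤ M} := by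
      apply measure_mono_ae
      filter_upwards [hae] with ω hω h
      exact le_trans h hω
    have hM0 : 0 ≤ M := ENNReal.toReal_nonneg
    calc (P {ω | |Δ ω| ≤ |Δhat ω - Δ ω|}).toReal
        ≤ (P {ω | |Δ ω| ≤ M}).toReal := ENNReal.toReal_mono (measure_ne_top P _) hsub
      _ ≤ C * M ^ α := hmargin M hM0
end

section
/- Let f : ℝ^k → ℝ, let c > 0, and let β₀ ∈ ℝ^k be a global minimizer of f satisfying the quadratic growth condition c‖β − β₀‖² ≤ f(β) − f(β₀) for all β ∈ ℝ^k. Let ξ₁, …, ξ_m ∈ ℝ^k and let β_ξ be a global minimizer of the perturbed objective f_ξ(β) = f(β) + Σ_{j=1}^m ⟨β, ξⱼ⟩². Then c ‖β₀ − β_ξ‖² ≤ (‖β_ξ‖² + ‖β₀‖²) · Σ_{j=1}^m ‖ξⱼ‖². -/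
open Finset

/-- Perturbation bound under quadratic growth: if `β₀` is a global minimizer of `f`
with quadratic growth constant `c`, and `β_ξ` globally minimizes the penalized objective
`f(β) + Σⱼ ⟨β, ξⱼ⟩²`, then `c ‖β₀ − β_ξ‖² ≤ (‖β_ξ‖² + ‖β₀‖²) · Σⱼ ‖ξⱼ‖²`. -/
theorem stmt_8 (k m : ℕ) (f : (Fin k → ℝ) → ℝ) (c : ℝ) (hc : 0 < c)
    (β₀ : Fin k → ℝ) (hmin : ∀ β : Fin k → ℝ, f β₀ ≤ f β)
    (hqg : ∀ β : Fin k → ℝ, c * ∑ i, (β i - β₀ i) ^ 2 ≤ f β - f β₀)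
    (ξ : Fin m → Fin k → ℝ) (βξ : Fin k → ℝ)
    (hβξ : ∀ β : Fin k → ℝ,
      f βξ + ∑ j, (∑ i, βξ i * ξ j i) ^ 2 ≤ f β + ∑ j, (∑ i, β i * ξ j i) ^ 2) :
    c * ∑ i, (β₀ i - βξ i) ^ 2
      ≤ ((∑ i, (βξ i) ^ 2) + ∑ i, (β₀ i) ^ 2) * ∑ j, ∑ i, (ξ j i) ^ 2 := by
  have h1 : c * ∑ i, (β₀ i - βξ i) ^ 2 ≤ f βξ - f β₀ := by
    calc c * ∑ i, (β₀ i - βξ i) ^ 2 = c * ∑ i, (βξ i - β₀ i) ^ 2 := by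
          congr 1; exact Finset.sum_congr rfl fun i _ => by ring
      _ ≤ f βξ - f β₀ := hqg βξ
  have h2 : f βξ - f β₀ ≤ ∑ j, (∑ i, β₀ i * ξ j i) ^ 2 := by
    have := hβξ β₀
    have hnn : (0:ℝ) ≤ ∑ j, (∑ i, βξ i * ξ j i) ^ 2 :=
      Finset.sum_nonneg fun j _ => sq_nonneg _
    linarith
  have h3 : ∑ j, (∑ i, β₀ i * ξ j i) ^ 2
      ≤ (∑ i, (β₀ i) ^ 2) * ∑ j, ∑ i, (ξ j i) ^ 2 := by
    rw [Finset.mul_sum]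
    exact Finset.sum_le_sum fun j _ =>
      Finset.sum_mul_sq_le_sq_mul_sq _ _ _
  have h4 : (∑ i, (β₀ i) ^ 2) * ∑ j, ∑ i, (ξ j i) ^ 2
      ≤ ((∑ i, (βξ i) ^ 2) + ∑ i, (β₀ i) ^ 2) * ∑ j, ∑ i, (ξ j i) ^ 2 := by
    apply mul_le_mul_of_nonneg_right
    · have : (0:ℝ) ≤ ∑ i, (βξ i) ^ 2 := Finset.sum_nonneg fun i _ => sq_nonneg _
      linarith
    · exact Finset.sum_nonneg fun j _ => Finset.sum_nonneg fun i _ => sq_nonneg _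
  linarith
end

section
/- Let (Ω, F, P) be a probability space, let θ, θ̂ : Ω → ℝ be measurable with θ̂ − θ essentially bounded, and let ξ : Ω → ℝ be essentially bounded. Assume θ satisfies the margin condition with exponent α > 0 and constant C > 0, i.e. P(|θ| ≤ t) ≤ C·t^α for all t ≥ 0. Then |E[ξ · (1{θ̂ > 0} − 1{θ > 0})]| ≤ C · ‖ξ‖_{L^∞(P)} · ‖θ̂ − θ‖_{L^∞(P)}^α. -/
open MeasureTheory
open scoped ENNReal

lemma ae_norm_le_eLpNorm_top {Ω : Type*} [MeasurableSpace Ω] {P : Measure Ω}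
    {f : Ω → ℝ} (hf : MemLp f ∞ P) :
    ∀ᵐ ω ∂P, ‖f ω‖ ≤ (eLpNorm f ∞ P).toReal := by
  filter_upwards [ae_le_eLpNormEssSup (f := f) (μ := P)] with ω h
  have hne : eLpNormEssSup f P ≠ ∞ := by
    simpa [eLpNorm_exponent_top] using hf.2.ne
  have := ENNReal.toReal_mono hne h
  simpa [eLpNorm_exponent_top] using this

/-- Bias bound for plug-in estimators of non-smooth functionals (Appendix C, Lemma 3):
under the margin condition for `θ` with exponent `α` and constant `C`,
`|E[ξ · (1{θ̂ > 0} − 1{θ > 0})]| ≤ C · ‖ξ‖_∞ · ‖θ̂ − θ‖_∞^α`. -/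
theorem stmt_15 {Ω : Type*} [MeasurableSpace Ω] (P : Measure Ω) [IsProbabilityMeasure P]
    (θ θhat : Ω → ℝ) (hθ : Measurable θ) (hθhat : Measurable θhat)
    (hbdd : MemLp (θhat - θ) ∞ P)
    (ξ : Ω → ℝ) (hξ : MemLp ξ ∞ P)
    (α C : ℝ) (hα : 0 < α) (hC : 0 < C)
    (hmargin : ∀ t : ℝ, 0 ≤ t → (P {ω | |θ ω| ≤ t}).toReal ≤ C * t ^ α) :
    |∫ ω, ξ ω * ((if 0 < θhat ω then (1 : ℝ) else 0) - (if 0 < θ ω then (1 : ℝ) else 0)) ∂P|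
      ≤ C * (eLpNorm ξ ∞ P).toReal * (eLpNorm (θhat - θ) ∞ P).toReal ^ α := by
  set M := (eLpNorm ξ ∞ P).toReal with hM
  set δ := (eLpNorm (θhat - θ) ∞ P).toReal with hδ
  have hM0 : 0 ≤ M := ENNReal.toReal_nonneg
  have hδ0 : 0 ≤ δ := ENNReal.toReal_nonneg
  set g := fun ω => ξ ω * ((if 0 < θhat ω then (1 : ℝ) else 0) - (if 0 < θ ω then (1 : ℝ) else 0))
    with hg
  set s : Set Ω := {ω | |θ ω| ≤ δ} with hs
  have hsm : MeasurableSet s := by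
    exact measurableSet_le hθ.abs measurable_const
  -- a.e. bound on g
  have hbound : ∀ᵐ ω ∂P, ‖g ω‖ ≤ s.indicator (fun _ => M) ω := by
    filter_upwards [ae_norm_le_eLpNorm_top hξ, ae_norm_le_eLpNorm_top hbdd] with ω h1 h2
    by_cases hiff : (0 < θhat ω ↔ 0 < θ ω)
    · have : g ω = 0 := by
        by_cases h : 0 < θ ω
        · simp [hg, h, hiff.mpr h]
        · have h2' : ¬ 0 < θhat ω := fun h' => h (hiff.mp h')
          simp [hg, h, h2']
      rw [this]
      simp only [norm_zero]
      exact Set.indicator_nonneg (fun _ _ => hM0) ω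
    · have hdiff : |θhat ω - θ ω| ≤ δ := by rw [Pi.sub_apply, Real.norm_eq_abs] at h2; exact h2
      have hωs : ω ∈ s := by
        simp only [hs, Set.mem_setOf_eq]
        rcases lt_or_ge 0 (θ ω) with hp | hp
        · have hn : ¬ (0 < θhat ω) := fun h => hiff (by tauto)
          push_neg at hn
          have : θ ω - θhat ω ≤ δ := (le_abs_self _).trans (by rwa [abs_sub_comm] at hdiff)
          rw [abs_of_pos hp]; linarith
        · have hp' : 0 < θhat ω := by
            by_contra h; exact hiff ⟨fun h' => absurd h' h, fun h' => absurd h' (not_lt.mpr hp)⟩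
          have : θhat ω - θ ω ≤ δ := (le_abs_self _).trans hdiff
          rw [abs_of_nonpos hp]; linarith
      have : ‖g ω‖ ≤ ‖ξ ω‖ := by
        rw [hg, norm_mul]
        have : ‖(if 0 < θhat ω then (1 : ℝ) else 0) - (if 0 < θ ω then (1 : ℝ) else 0)‖ ≤ 1 := by
          by_cases h1 : 0 < θhat ω <;> by_cases h2 : 0 < θ ω <;> simp [h1, h2]
        calc ‖ξ ω‖ * _ ≤ ‖ξ ω‖ * 1 := by
              exact mul_le_mul_of_nonneg_left this (norm_nonneg _)
          _ = ‖ξ ω‖ := mul_one _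
      rw [Set.indicator_of_mem hωs]
      exact this.trans h1
  have hgm : AEStronglyMeasurable g P := by
    apply hξ.1.mul
    apply Measurable.aestronglyMeasurable
    exact Measurable.sub (Measurable.ite (measurableSet_lt measurable_const hθhat)
      measurable_const measurable_const)
      (Measurable.ite (measurableSet_lt measurable_const hθ) measurable_const measurable_const)
  have hind : Integrable (s.indicator fun _ => M) P :=
    (integrable_const M).indicator hsm
  have hgint : Integrable g P := by
    refine Integrable.mono' hind hgm hbound
  calc |∫ ω, g ω ∂P| ≤ ∫ ω, ‖g ω‖ ∂P := by
        simpa [Real.norm_eq_abs] using norm_integral_le_integral_norm (μ := P) g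
    _ ≤ ∫ ω, s.indicator (fun _ => M) ω ∂P :=
        integral_mono_ae hgint.norm hind hbound
    _ = (P s).toReal * M := by
        rw [integral_indicator_const _ hsm]; simp [mul_comm, measureReal_def]
    _ ≤ (C * δ ^ α) * M := by
        exact mul_le_mul_of_nonneg_right (hmargin δ hδ0) hM0
    _ = C * M * δ ^ α := by ring
end
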